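/- arXiv:math/0410137 — 2 statements merged into one kernel-verified Lean document; each statement's English description precedes it below -/
import Mathlib

section
/- For every h = (h_1,...,h_N) ∈ ℝ^N, one has ‖∇h‖₂ ≤ N·‖Δh‖₂, where ‖∇h‖₂ and ‖Δh‖₂ are the discrete gradient and Laplacian norms. More precisely, ‖∇h‖₂² ≤ (N(N-1)/2)·‖Δh‖₂². -/
/-- Lemma 2.1, second inequality: `‖∇h‖₂ ≤ N·‖Δh‖₂`, and more precisely
`‖∇h‖₂² ≤ (N(N-1)/2)·‖Δh‖₂²`, where `‖∇h‖₂² = Σ_{i=1}^{N-1}(h_{i+1}-h_i)²` and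
`‖Δh‖₂² = Σ_{i=2}^{N-1}(2h_i - h_{i+1} - h_{i-1})² + (h_2-h_1)² + (h_N - h_{N-1})²`. -/
theorem stmt_1 (N : ℕ) (hN : 2 ≤ N) (h : ℕ → ℝ) :
    Real.sqrt (∑ i ∈ Finset.Icc 1 (N - 1), (h (i + 1) - h i) ^ 2)
      ≤ (N : ℝ) * Real.sqrt
        ((∑ i ∈ Finset.Icc 2 (N - 1), (2 * h i - h (i + 1) - h (i - 1)) ^ 2)
          + (h 2 - h 1) ^ 2 + (h N - h (N - 1)) ^ 2)
    ∧ (∑ i ∈ Finset.Icc 1 (N - 1), (h (i + 1) - h i) ^ 2)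
      ≤ ((N : ℝ) * (N - 1) / 2) *
        ((∑ i ∈ Finset.Icc 2 (N - 1), (2 * h i - h (i + 1) - h (i - 1)) ^ 2)
          + (h 2 - h 1) ^ 2 + (h N - h (N - 1)) ^ 2) := by
  set g : ℕ → ℝ := fun i => h (i + 1) - h i with hg
  set t : ℕ → ℝ := fun j => if j = 1 then g 1 else g j - g (j - 1) with ht
  set B : ℝ := (∑ i ∈ Finset.Icc 2 (N - 1), (2 * h i - h (i + 1) - h (i - 1)) ^ 2)
          + (h 2 - h 1) ^ 2 + (h N - h (N - 1)) ^ 2 with hB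
  have hBnn : 0 ≤ B := by
    have : 0 ≤ ∑ i ∈ Finset.Icc 2 (N - 1), (2 * h i - h (i + 1) - h (i - 1)) ^ 2 :=
      Finset.sum_nonneg fun i _ => sq_nonneg _
    rw [hB]; positivity
  -- telescoping
  have tele : ∀ i, 1 ≤ i → ∑ j ∈ Finset.Icc 1 i, t j = g i := by
    intro i hi
    induction i with
    | zero => omega
    | succ n ih =>
      rcases Nat.eq_or_lt_of_le hi with h1 | h1
      · simp [← h1, ht]
      · have hn : 1 ≤ n := by omega
        rw [Finset.sum_Icc_succ_top (by omega), ih hn, ht]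
        simp only [Nat.add_sub_cancel, if_neg (by omega : ¬ n + 1 = 1)]
        ring
  -- sum of squares of increments bounded by B
  have tsq : ∀ i, i ≤ N - 1 → ∑ j ∈ Finset.Icc 1 i, (t j) ^ 2 ≤ B := by
    intro i hiN
    rcases Nat.lt_or_ge i 1 with hi0 | hi1
    · interval_cases i
      simpa using hBnn
    have hins : Finset.Icc 1 i = insert 1 (Finset.Icc 2 i) := by
      ext x; simp; omega
    rw [hins, Finset.sum_insert (by simp)]
    have h1 : (t 1) ^ 2 = (h 2 - h 1) ^ 2 := by simp [ht, hg]
    have h2 : ∑ j ∈ Finset.Icc 2 i, (t j) ^ 2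
        = ∑ j ∈ Finset.Icc 2 i, (2 * h j - h (j + 1) - h (j - 1)) ^ 2 := by
      apply Finset.sum_congr rfl
      intro j hj
      have hj2 : 2 ≤ j := (Finset.mem_Icc.mp hj).1
      have hj1 : j - 1 + 1 = j := by omega
      simp only [ht, hg, if_neg (by omega : ¬ j = 1), hj1]
      ring
    have h3 : ∑ j ∈ Finset.Icc 2 i, (2 * h j - h (j + 1) - h (j - 1)) ^ 2
        ≤ ∑ j ∈ Finset.Icc 2 (N - 1), (2 * h j - h (j + 1) - h (j - 1)) ^ 2 := by
      apply Finset.sum_le_sum_of_subset_of_nonneg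
      · exact Finset.Icc_subset_Icc_right hiN
      · intro j _ _; exact sq_nonneg _
    rw [h1, h2, hB]
    have := sq_nonneg (h N - h (N - 1))
    linarith
  -- key pointwise bound
  have key : ∀ i ∈ Finset.Icc 1 (N - 1), (g i) ^ 2 ≤ (i : ℝ) * B := by
    intro i hi
    obtain ⟨hi1, hi2⟩ := Finset.mem_Icc.mp hi
    calc (g i) ^ 2 = (∑ j ∈ Finset.Icc 1 i, t j) ^ 2 := by rw [tele i hi1]
      _ ≤ (Finset.Icc 1 i).card * ∑ j ∈ Finset.Icc 1 i, (t j) ^ 2 :=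
          sq_sum_le_card_mul_sum_sq
      _ = (i : ℝ) * ∑ j ∈ Finset.Icc 1 i, (t j) ^ 2 := by
          rw [Nat.card_Icc]; norm_num
      _ ≤ (i : ℝ) * B := by
          apply mul_le_mul_of_nonneg_left (tsq i hi2) (by positivity)
  -- Gauss sum
  have gauss : ∀ n : ℕ, ∑ i ∈ Finset.Icc 1 n, (i : ℝ) = (n : ℝ) * (n + 1) / 2 := by
    intro n
    induction n with
    | zero => simp
    | succ m ih =>
      rw [Finset.sum_Icc_succ_top (by omega), ih]
      push_cast; ring
  have hN1 : ((N - 1 : ℕ) : ℝ) = (N : ℝ) - 1 := by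
    have : (1 : ℕ) ≤ N := by omega
    push_cast [this]; ring
  -- second inequality
  have main : (∑ i ∈ Finset.Icc 1 (N - 1), (g i) ^ 2) ≤ ((N : ℝ) * (N - 1) / 2) * B := by
    calc (∑ i ∈ Finset.Icc 1 (N - 1), (g i) ^ 2)
        ≤ ∑ i ∈ Finset.Icc 1 (N - 1), (i : ℝ) * B := Finset.sum_le_sum key
      _ = (∑ i ∈ Finset.Icc 1 (N - 1), (i : ℝ)) * B := by rw [Finset.sum_mul]
      _ = ((N : ℝ) * (N - 1) / 2) * B := by
          rw [gauss, hN1]; ring_nf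
  refine ⟨?_, main⟩
  calc Real.sqrt (∑ i ∈ Finset.Icc 1 (N - 1), (g i) ^ 2)
      ≤ Real.sqrt (((N : ℝ) * (N - 1) / 2) * B) := Real.sqrt_le_sqrt main
    _ ≤ Real.sqrt ((N : ℝ) ^ 2 * B) := by
        apply Real.sqrt_le_sqrt
        have hNR : (2 : ℝ) ≤ (N : ℝ) := by exact_mod_cast hN
        have : (N : ℝ) * (N - 1) / 2 ≤ (N : ℝ) ^ 2 := by nlinarith
        exact mul_le_mul_of_nonneg_right this hBnn
    _ = (N : ℝ) * Real.sqrt B := by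
        rw [Real.sqrt_mul (by positivity), Real.sqrt_sq (by positivity)]
end

section
/- Let N, N₁, N₂ ∈ ℕ with N = N₁ + N₂, and let g = (g_i)_{i≠N₁, 1≤i≤N-1} be real numbers with Σ_{i≠N₁}(g_i − a)² ≤ C̄/c₋ for constants C̄, c₋ > 0. Define F(g) = (1/N₁)Σ_{i=1}^{N₁-1} i(g_i − a) + (1/N₂)Σ_{i=N₁+1}^{N-1}(N−i)(g_i − a). Then |F(g)| ≤ √(C̄/c₋)·√N. Consequently, if κ > 1/2 and N is sufficiently large, the inequality F(g) ≤ −N^κ − b'₂ + a cannot hold. -/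
/-- Step 2 of Proposition 3.5: the Cauchy–Schwarz bound `|F(g)| ≤ √(C̄/c₋)·√N` on
`F(g) = (1/N₁)Σ_{i=1}^{N₁-1} i(g_i−a) + (1/N₂)Σ_{i=N₁+1}^{N-1}(N−i)(g_i−a)` when
`Σ_{i≠N₁}(g_i−a)² ≤ C̄/c₋`; consequently, for `κ > 1/2` and `N` large, the inequality
`F(g) ≤ −N^κ − b'₂ + a` cannot hold. -/
theorem stmt_8 (a C c κ b₂' : ℝ) (hC : 0 < C) (hc : 0 < c)
    (hκ : 1 / 2 < κ) (hb₂' : a ≤ b₂') :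
    (∀ (N N₁ N₂ : ℕ) (g : ℕ → ℝ), N = N₁ + N₂ → 1 ≤ N₁ → 1 ≤ N₂ →
      (∑ i ∈ (Finset.Icc 1 (N - 1)).erase N₁, (g i - a) ^ 2) ≤ C / c →
      |(1 / (N₁ : ℝ)) * ∑ i ∈ Finset.Icc 1 (N₁ - 1), (i : ℝ) * (g i - a)
        + (1 / (N₂ : ℝ)) * ∑ i ∈ Finset.Icc (N₁ + 1) (N - 1), ((N : ℝ) - i) * (g i - a)|
        ≤ Real.sqrt (C / c) * Real.sqrt N)
    ∧ ∃ N₀ : ℕ, ∀ (N N₁ N₂ : ℕ) (g : ℕ → ℝ), N₀ ≤ N → N = N₁ + N₂ → 1 ≤ N₁ → 1 ≤ N₂ →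
      (∑ i ∈ (Finset.Icc 1 (N - 1)).erase N₁, (g i - a) ^ 2) ≤ C / c →
      ¬ ((1 / (N₁ : ℝ)) * ∑ i ∈ Finset.Icc 1 (N₁ - 1), (i : ℝ) * (g i - a)
        + (1 / (N₂ : ℝ)) * ∑ i ∈ Finset.Icc (N₁ + 1) (N - 1), ((N : ℝ) - i) * (g i - a)
          ≤ -(N : ℝ) ^ κ - b₂' + a) := by
  have hCc : (0:ℝ) ≤ C / c := le_of_lt (div_pos hC hc)
  have key : ∀ (N N₁ N₂ : ℕ) (g : ℕ → ℝ), N = N₁ + N₂ → 1 ≤ N₁ → 1 ≤ N₂ →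
      (∑ i ∈ (Finset.Icc 1 (N - 1)).erase N₁, (g i - a) ^ 2) ≤ C / c →
      |(1 / (N₁ : ℝ)) * ∑ i ∈ Finset.Icc 1 (N₁ - 1), (i : ℝ) * (g i - a)
        + (1 / (N₂ : ℝ)) * ∑ i ∈ Finset.Icc (N₁ + 1) (N - 1), ((N : ℝ) - i) * (g i - a)|
        ≤ Real.sqrt (C / c) * Real.sqrt N := by
    intro N N₁ N₂ g hN h1 h2 hsum
    have hN₁pos : (0:ℝ) < N₁ := by exact_mod_cast h1
    have hN₂pos : (0:ℝ) < N₂ := by exact_mod_cast h2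
    set w : ℕ → ℝ := fun i => if i ≤ N₁ - 1 then (i:ℝ)/N₁ else ((N:ℝ) - i)/N₂ with hw
    set S := (Finset.Icc 1 (N - 1)).erase N₁ with hS
    have hsplit : S = Finset.Icc 1 (N₁-1) ∪ Finset.Icc (N₁+1) (N-1) := by
      ext i
      simp only [hS, Finset.mem_erase, Finset.mem_Icc, Finset.mem_union]
      omega
    have hdisj : Disjoint (Finset.Icc 1 (N₁-1)) (Finset.Icc (N₁+1) (N-1)) := by
      simp only [Finset.disjoint_left, Finset.mem_Icc]
      omega
    have hF : (1 / (N₁ : ℝ)) * ∑ i ∈ Finset.Icc 1 (N₁ - 1), (i : ℝ) * (g i - a)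
        + (1 / (N₂ : ℝ)) * ∑ i ∈ Finset.Icc (N₁ + 1) (N - 1), ((N : ℝ) - i) * (g i - a)
        = ∑ i ∈ S, w i * (g i - a) := by
      rw [hsplit, Finset.sum_union hdisj, Finset.mul_sum, Finset.mul_sum]
      congr 1
      · apply Finset.sum_congr rfl
        intro i hi
        simp only [Finset.mem_Icc] at hi
        rw [hw]; simp only [if_pos hi.2]; ring
      · apply Finset.sum_congr rfl
        intro i hi
        simp only [Finset.mem_Icc] at hi
        have : ¬ (i ≤ N₁ - 1) := by omega
        rw [hw]; simp only [if_neg this]; ring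
    have hw2 : ∑ i ∈ S, w i ^ 2 ≤ (N:ℝ) := by
      rw [hsplit, Finset.sum_union hdisj]
      have hA : ∑ i ∈ Finset.Icc 1 (N₁-1), w i ^ 2 ≤ (N₁:ℝ) := by
        calc ∑ i ∈ Finset.Icc 1 (N₁-1), w i ^ 2
            ≤ ∑ _i ∈ Finset.Icc 1 (N₁-1), (1:ℝ) := by
              apply Finset.sum_le_sum
              intro i hi
              simp only [Finset.mem_Icc] at hi
              rw [hw]; simp only [if_pos hi.2]
              have h1' : (i:ℝ)/N₁ ≤ 1 := by
                rw [div_le_one hN₁pos]; exact_mod_cast Nat.le_of_lt_succ (by omega)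
              have h0' : (0:ℝ) ≤ (i:ℝ)/N₁ := by positivity
              nlinarith
          _ = ((Finset.Icc 1 (N₁-1)).card : ℝ) := by simp
          _ ≤ (N₁:ℝ) := by
              have : (Finset.Icc 1 (N₁-1)).card ≤ N₁ := by rw [Nat.card_Icc]; omega
              exact_mod_cast this
      have hB : ∑ i ∈ Finset.Icc (N₁+1) (N-1), w i ^ 2 ≤ (N₂:ℝ) := by
        calc ∑ i ∈ Finset.Icc (N₁+1) (N-1), w i ^ 2
            ≤ ∑ _i ∈ Finset.Icc (N₁+1) (N-1), (1:ℝ) := by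
              apply Finset.sum_le_sum
              intro i hi
              simp only [Finset.mem_Icc] at hi
              have hni : ¬ (i ≤ N₁ - 1) := by omega
              rw [hw]; simp only [if_neg hni]
              have hiN : (i:ℝ) ≤ (N:ℝ) := by exact_mod_cast (by omega : i ≤ N)
              have h1' : ((N:ℝ) - i)/N₂ ≤ 1 := by
                rw [div_le_one hN₂pos]
                have : (N:ℝ) ≤ (i:ℝ) + N₂ := by exact_mod_cast (by omega : N ≤ i + N₂)
                linarith
              have h0' : (0:ℝ) ≤ ((N:ℝ) - i)/N₂ := by
                apply div_nonneg _ hN₂pos.le; linarith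
              nlinarith
          _ = ((Finset.Icc (N₁+1) (N-1)).card : ℝ) := by simp
          _ ≤ (N₂:ℝ) := by
              have : (Finset.Icc (N₁+1) (N-1)).card ≤ N₂ := by rw [Nat.card_Icc]; omega
              exact_mod_cast this
      have : (N₁:ℝ) + N₂ = N := by exact_mod_cast (by omega : N₁ + N₂ = N)
      linarith
    have hcs := Finset.sum_mul_sq_le_sq_mul_sq S w (fun i => g i - a)
    have hd2nonneg : (0:ℝ) ≤ ∑ i ∈ S, (g i - a) ^ 2 :=
      Finset.sum_nonneg fun i _ => sq_nonneg _
    have hw2nonneg : (0:ℝ) ≤ ∑ i ∈ S, w i ^ 2 :=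
      Finset.sum_nonneg fun i _ => sq_nonneg _
    rw [hF]
    have habs : |∑ i ∈ S, w i * (g i - a)|
        = Real.sqrt ((∑ i ∈ S, w i * (g i - a)) ^ 2) := by
      rw [Real.sqrt_sq_eq_abs]
    rw [habs]
    calc Real.sqrt ((∑ i ∈ S, w i * (g i - a)) ^ 2)
        ≤ Real.sqrt ((∑ i ∈ S, w i ^ 2) * ∑ i ∈ S, (g i - a) ^ 2) :=
          Real.sqrt_le_sqrt hcs
      _ = Real.sqrt (∑ i ∈ S, w i ^ 2) * Real.sqrt (∑ i ∈ S, (g i - a) ^ 2) :=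
          Real.sqrt_mul hw2nonneg _
      _ ≤ Real.sqrt (N:ℝ) * Real.sqrt (C / c) := by
          apply mul_le_mul
          · exact Real.sqrt_le_sqrt hw2
          · exact Real.sqrt_le_sqrt hsum
          · exact Real.sqrt_nonneg _
          · exact Real.sqrt_nonneg _
      _ = Real.sqrt (C / c) * Real.sqrt (N:ℝ) := by ring
  refine ⟨key, ?_⟩
  have htend : Filter.Tendsto (fun n : ℕ => (n:ℝ) ^ (κ - 1/2)) Filter.atTop Filter.atTop :=
    (tendsto_rpow_atTop (by linarith)).comp tendsto_natCast_atTop_atTop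
  obtain ⟨N₀, hN₀⟩ := Filter.eventually_atTop.mp
    (htend.eventually_gt_atTop (Real.sqrt (C / c)))
  refine ⟨N₀, fun N N₁ N₂ g hge hN h1 h2 hsum hle => ?_⟩
  have hb := key N N₁ N₂ g hN h1 h2 hsum
  have hNpos : (0:ℝ) < N := by
    have : 1 ≤ N := by omega
    exact_mod_cast this
  have hlarge := hN₀ N hge
  have hκsplit : (N:ℝ) ^ κ = (N:ℝ) ^ (κ - 1/2) * (N:ℝ) ^ ((1:ℝ)/2) := by
    rw [← Real.rpow_add hNpos]; ring_nf
  have hsqrtN : Real.sqrt (N:ℝ) = (N:ℝ) ^ ((1:ℝ)/2) := Real.sqrt_eq_rpow (N:ℝ)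
  have hhalfpos : (0:ℝ) < (N:ℝ) ^ ((1:ℝ)/2) := Real.rpow_pos_of_pos hNpos _
  have hgt : Real.sqrt (C / c) * Real.sqrt (N:ℝ) < (N:ℝ) ^ κ := by
    rw [hκsplit, hsqrtN]
    exact mul_lt_mul_of_pos_right hlarge hhalfpos
  have habs := neg_abs_le ((1 / (N₁ : ℝ)) * ∑ i ∈ Finset.Icc 1 (N₁ - 1), (i : ℝ) * (g i - a)
        + (1 / (N₂ : ℝ)) * ∑ i ∈ Finset.Icc (N₁ + 1) (N - 1), ((N : ℝ) - i) * (g i - a))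
  linarith
end
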